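/- arXiv:1903.01164 — 3 statements merged into one kernel-verified Lean document; each statement's English description precedes it below -/
import Mathlib

section
/- Let V and W be finite-dimensional real vector spaces. Let (q_α)_{α∈A} be a nonempty finite family of linear maps V* → V each of which is symmetric (⟨f, q_α g⟩ = ⟨g, q_α f⟩ for all f, g ∈ V*) and positive definite (⟨f, q_α f⟩ > 0 for all f ≠ 0). Let b : W → Hom(V, V*) be a linear map such that each b_ω is skew (⟨b_ω x, y⟩ = −⟨b_ω y, x⟩ for all x, y ∈ V), assume there is ω₀ ∈ W with b_{ω₀} bijective, and assume the commutation relations q_α ∘ b_ω ∘ q_β = q_β ∘ b_ω ∘ q_α for all α, β ∈ A and all ω ∈ W. Then there is a finite family (P_γ)_{γ∈Γ} of nonzero linear projections of V (P_γ² = P_γ) such that: (i) Σ_{γ∈Γ} P_γ = id_V and P_{γ₁}P_{γ₂} = 0 for γ₁ ≠ γ₂; (ii) each P_γ is b_ω-self-adjoint for every ω ∈ W (⟨b_ω P_γ x, y⟩ = ⟨b_ω x, P_γ y⟩ for all x, y ∈ V) and q_α^{-1}-self-adjoint for every α ∈ A (⟨q_α^{-1} P_γ x, y⟩ = ⟨q_α^{-1}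 x, P_γ y⟩ for all x, y ∈ V, q_α being invertible by positive definiteness); (iii) for every γ ∈ Γ, the linear maps P_γ ∘ q_α ∘ P_γ* : V* → V, α ∈ A, are pairwise proportional (each is a real scalar multiple of any other), where P_γ* : V* → V* is the transpose of P_γ. -/
open scoped RealInnerProductSpace

set_option maxHeartbeats 1000000 in
lemma stmt4_aux {V : Type*} [NormedAddCommGroup V] [InnerProductSpace ℝ V]
    [FiniteDimensional ℝ V] {A : Type*} [Fintype A]
    (T : A → (V →ₗ[ℝ] V))
    (hTsymm : ∀ α, (T α).IsSymmetric)
    (hTpos : ∀ (α : A) (x : V), x ≠ 0 → 0 < ⟪T α x, x⟫)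
    (hTcomm : ∀ α β, T α ∘ₗ T β = T β ∘ₗ T α) :
    ∃ (N : ℕ) (P : Fin N → (V →ₗ[ℝ] V)) (χ : Fin N → A → ℝ),
      (∀ γ, P γ ≠ 0) ∧ (∀ γ, P γ ∘ₗ P γ = P γ) ∧
      (∑ γ, P γ) = LinearMap.id ∧
      (∀ γ₁ γ₂, γ₁ ≠ γ₂ → P γ₁ ∘ₗ P γ₂ = 0) ∧
      (∀ γ (x y : V), ⟪P γ x, y⟫ = ⟪x, P γ y⟫) ∧
      (∀ γ (S S' : V →ₗ[ℝ] V), (∀ α, S ∘ₗ T α = T α ∘ₗ S) →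
        (∀ α, S' ∘ₗ T α = T α ∘ₗ S') →
        (∀ x y : V, ⟪x, S y⟫ = ⟪S' x, y⟫) →
        P γ ∘ₗ S = S ∘ₗ P γ) ∧
      (∀ γ α, T α ∘ₗ P γ = χ γ α • P γ) ∧
      (∀ γ α, 0 < χ γ α) := by
  classical
  set E : (A → ℝ) → Submodule ℝ V :=
    fun χ => ⨅ α, Module.End.eigenspace (T α) (χ α) with hE
  have hCommP : Pairwise (Function.onFun Commute T) := by
    intro α β _
    simp only [Function.onFun, Commute, SemiconjBy, Module.End.mul_eq_comp]
    exact hTcomm α β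
  have htop : ⨆ χ : A → ℝ, E χ = ⊤ :=
    LinearMap.IsSymmetric.iSup_iInf_eq_top_of_commute hTsymm hCommP
  have hOF := LinearMap.IsSymmetric.orthogonalFamily_iInf_eigenspaces hTsymm
  have horth : ∀ {χ ψ : A → ℝ}, χ ≠ ψ → ∀ {x y : V}, x ∈ E χ → y ∈ E ψ → ⟪x, y⟫ = 0 := by
    intro χ ψ h x y hx hy
    exact hOF h (⟨x, hx⟩ : E χ) (⟨y, hy⟩ : E ψ)
  have hle : ∀ {χ ψ : A → ℝ}, χ ≠ ψ → E ψ ≤ (E χ)ᗮ := by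
    intro χ ψ h y hy
    exact (Submodule.mem_orthogonal _ _).mpr fun u hu => horth h hu hy
  haveI : IsNoetherian ℝ V := IsNoetherian.iff_fg.mpr inferInstance
  have hindep : iSupIndep E := hOF.independent
  have hfin : {χ : A → ℝ | E χ ≠ ⊥}.Finite := Submodule.finite_ne_bot_of_iSupIndep hindep
  haveI := hfin.fintype
  set ι := {χ : A → ℝ | E χ ≠ ⊥} with hι
  let e : ι ≃ Fin (Fintype.card ι) := Fintype.equivFin ι
  refine ⟨Fintype.card ι, ?_⟩
  set K : Fin (Fintype.card ι) → Submodule ℝ V := fun γ => E (e.symm γ).1 with hK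
  set P : Fin (Fintype.card ι) → (V →ₗ[ℝ] V) :=
    fun γ => (K γ).subtype ∘ₗ (Submodule.orthogonalProjectionOnto (K γ) : V →ₗ[ℝ] K γ) with hP
  have hPapp : ∀ γ (x : V), P γ x = (Submodule.orthogonalProjectionOnto (K γ) x : V) := fun _ _ => rfl
  have hmem : ∀ γ (x : V), P γ x ∈ K γ := fun γ x => (Submodule.orthogonalProjectionOnto (K γ) x).2
  have hfix : ∀ γ {x : V}, x ∈ K γ → P γ x = x := by
    intro γ x hx
    rw [hPapp]
    exact Submodule.starProjection_eq_self_iff.mpr hx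
  have hzero : ∀ γ {x : V}, x ∈ (K γ)ᗮ → P γ x = 0 := by
    intro γ x hx
    rw [hPapp, Submodule.orthogonalProjectionOnto_apply_of_mem_orthogonal hx,
      Submodule.coe_zero]
  have hsub : ∀ γ (x : V), x - P γ x ∈ (K γ)ᗮ := by
    intro γ x
    exact Submodule.sub_starProjection_mem_orthogonal x
  have hsymP : ∀ γ (x y : V), ⟪P γ x, y⟫ = ⟪x, P γ y⟫ := by
    intro γ x y
    rw [hPapp, hPapp]
    exact Submodule.inner_starProjection_left_eq_right _ x y
  have hKne : ∀ γ₁ γ₂, γ₁ ≠ γ₂ → (e.symm γ₁).1 ≠ (e.symm γ₂).1 := by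
    intro γ₁ γ₂ h hc
    exact h (by simpa using e.symm.injective (Subtype.ext hc))
  refine ⟨P, fun γ => (e.symm γ).1, ?_, ?_, ?_, ?_, hsymP, ?_, ?_, ?_⟩
  · -- nonzero
    intro γ hzero'
    obtain ⟨x, hx, hxne⟩ := Submodule.ne_bot_iff (K γ) |>.mp (e.symm γ).2
    exact hxne (by rw [← hfix γ hx, hzero']; rfl)
  · -- idempotent
    intro γ
    ext x
    exact hfix γ (hmem γ x)
  · -- sum = id
    ext x
    have hx : x ∈ ⨆ χ : A → ℝ, E χ := htop ▸ Submodule.mem_top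
    simp only [LinearMap.id_coe, id_eq, LinearMap.coe_sum, Finset.sum_apply]
    refine Submodule.iSup_induction (motive := fun x => ∑ γ, P γ x = x) E hx ?_ (by simp) ?_
    · intro χ x hx
      by_cases hbot : E χ = ⊥
      · have hx0 : x = 0 := by rw [hbot] at hx; simpa using hx
        simp [hx0]
      · have hχι : χ ∈ ι := hbot
        set γ₀ := e ⟨χ, hχι⟩ with hγ₀
        have hγ₀K : K γ₀ = E χ := by simp only [hK, hγ₀, Equiv.symm_apply_apply]
        rw [Finset.sum_eq_single γ₀]
        · exact hfix γ₀ (hγ₀K ▸ hx)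
        · intro γ _ hne
          have : (e.symm γ).1 ≠ χ := by
            intro hc
            exact hne (by rw [← e.apply_symm_apply γ, hγ₀]; congr 1; exact Subtype.ext hc)
          exact hzero γ (hle this hx)
        · intro h; exact absurd (Finset.mem_univ γ₀) h
    · intro x y hx hy
      simp only [map_add, Finset.sum_add_distrib, hx, hy]
  · -- pairwise orthogonal
    intro γ₁ γ₂ h
    ext x
    have : P γ₂ x ∈ (K γ₁)ᗮ := hle (hKne γ₁ γ₂ h) (hmem γ₂ x)
    simpa using hzero γ₁ this
  · -- commutation
    intro γ S S' hS hS' hadj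
    have hSE : ∀ {x : V}, x ∈ K γ → S x ∈ K γ := by
      intro x hx
      refine Submodule.mem_iInf _ |>.mpr fun α => ?_
      have hxα := Submodule.mem_iInf _ |>.mp hx α
      rw [Module.End.mem_eigenspace_iff] at hxα ⊢
      calc T α (S x) = (T α ∘ₗ S) x := rfl
        _ = (S ∘ₗ T α) x := by rw [hS]
        _ = S (T α x) := rfl
        _ = (e.symm γ).1 α • S x := by rw [hxα, map_smul]
    have hS'E : ∀ {x : V}, x ∈ K γ → S' x ∈ K γ := by
      intro x hx
      refine Submodule.mem_iInf _ |>.mpr fun α => ?_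
      have hxα := Submodule.mem_iInf _ |>.mp hx α
      rw [Module.End.mem_eigenspace_iff] at hxα ⊢
      calc T α (S' x) = (T α ∘ₗ S') x := rfl
        _ = (S' ∘ₗ T α) x := by rw [hS']
        _ = S' (T α x) := rfl
        _ = (e.symm γ).1 α • S' x := by rw [hxα, map_smul]
    have hSperp : ∀ {x : V}, x ∈ (K γ)ᗮ → S x ∈ (K γ)ᗮ := by
      intro x hx
      refine (Submodule.mem_orthogonal _ _).mpr fun u hu => ?_
      rw [hadj]
      exact (Submodule.mem_orthogonal _ _).mp hx _ (hS'E hu)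
    ext x
    have hdec : S x = S (P γ x) + S (x - P γ x) := by rw [← map_add]; congr 1; abel
    calc (P γ ∘ₗ S) x = P γ (S (P γ x) + S (x - P γ x)) := by
          rw [LinearMap.comp_apply, hdec]
      _ = P γ (S (P γ x)) + P γ (S (x - P γ x)) := map_add _ _ _
      _ = S (P γ x) + 0 := by rw [hfix γ (hSE (hmem γ x)), hzero γ (hSperp (hsub γ x))]
      _ = (S ∘ₗ P γ) x := by simp
  · -- eigen-equation
    intro γ α
    ext x
    have := Submodule.mem_iInf _ |>.mp (hmem γ x) α
    rw [Module.End.mem_eigenspace_iff] at this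
    simpa using this
  · -- positivity
    intro γ α
    obtain ⟨x, hx, hxne⟩ := Submodule.ne_bot_iff (K γ) |>.mp (e.symm γ).2
    have h1 : T α x = (e.symm γ).1 α • x := by
      have := Submodule.mem_iInf _ |>.mp hx α
      rwa [Module.End.mem_eigenspace_iff] at this
    have h2 : 0 < ⟪T α x, x⟫ := hTpos α x hxne
    rw [h1, real_inner_smul_left] at h2
    have h3 : 0 < ⟪x, x⟫ := lt_of_not_ge fun hle => hxne (real_inner_self_nonpos.mp hle)
    nlinarith
/-- Coordinate-free version of the decomposition for commuting
sub-Laplacians on an MW⁺ group: given symmetric positive definite `q α : V* → V` (with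
two-sided inverses `qinv α`), skew `b ω : V → V*` depending linearly on `ω ∈ W`, some
`b ω₀` bijective, and `q α ∘ b ω ∘ q β = q β ∘ b ω ∘ q α`, there is a finite family of
nonzero pairwise-orthogonal projections summing to the identity, self-adjoint for each
`b ω` and each `qinv α`, such that on each range the maps `P γ ∘ q α ∘ (P γ)*` are
pairwise proportional. -/
theorem stmt4 {V W : Type*} [AddCommGroup V] [Module ℝ V] [FiniteDimensional ℝ V]
    [AddCommGroup W] [Module ℝ W]
    {A : Type*} [Fintype A] [Nonempty A]
    (q : A → (Module.Dual ℝ V →ₗ[ℝ] V))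
    (hqsymm : ∀ (α : A) (f g : Module.Dual ℝ V), f (q α g) = g (q α f))
    (hqpos : ∀ (α : A) (f : Module.Dual ℝ V), f ≠ 0 → 0 < f (q α f))
    (qinv : A → (V →ₗ[ℝ] Module.Dual ℝ V))
    (hqinv₁ : ∀ α, qinv α ∘ₗ q α = LinearMap.id)
    (hqinv₂ : ∀ α, q α ∘ₗ qinv α = LinearMap.id)
    (b : W →ₗ[ℝ] (V →ₗ[ℝ] Module.Dual ℝ V))
    (hbskew : ∀ (ω : W) (x y : V), b ω x y = -(b ω y x))
    (hb₀ : ∃ ω₀ : W, Function.Bijective (b ω₀))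
    (hcomm : ∀ (α β : A) (ω : W), q α ∘ₗ b ω ∘ₗ q β = q β ∘ₗ b ω ∘ₗ q α) :
    ∃ (N : ℕ) (P : Fin N → (V →ₗ[ℝ] V)),
      (∀ γ, P γ ≠ 0) ∧ (∀ γ, P γ ∘ₗ P γ = P γ) ∧
      (∑ γ, P γ) = LinearMap.id ∧
      (∀ γ₁ γ₂ : Fin N, γ₁ ≠ γ₂ → P γ₁ ∘ₗ P γ₂ = 0) ∧
      (∀ (γ : Fin N) (ω : W) (x y : V), b ω (P γ x) y = b ω x (P γ y)) ∧
      (∀ (γ : Fin N) (α : A) (x y : V), qinv α (P γ x) y = qinv α x (P γ y)) ∧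
      (∀ (γ : Fin N) (α β : A), ∃ c : ℝ,
        P γ ∘ₗ q α ∘ₗ (P γ).dualMap = c • (P γ ∘ₗ q β ∘ₗ (P γ).dualMap)) := by
  classical
  obtain ⟨ω₀, hω₀⟩ := hb₀
  set α₀ : A := Classical.arbitrary A with hα₀
  have hq1 : ∀ (α : A) (f : Module.Dual ℝ V), qinv α (q α f) = f := fun α f => by
    simpa using LinearMap.ext_iff.mp (hqinv₁ α) f
  have hq2 : ∀ (α : A) (x : V), q α (qinv α x) = x := fun α x => by
    simpa using LinearMap.ext_iff.mp (hqinv₂ α) x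
  have hcomm' : ∀ (α β : A) (ω : W) (f : Module.Dual ℝ V),
      q α (b ω (q β f)) = q β (b ω (q α f)) := fun α β ω f => by
    simpa using LinearMap.ext_iff.mp (hcomm α β ω) f
  have hs : ∀ (α : A) (x y : V), qinv α x y = qinv α y x := fun α x y => by
    calc qinv α x y = qinv α x (q α (qinv α y)) := by rw [hq2]
      _ = qinv α y (q α (qinv α x)) := hqsymm α _ _
      _ = qinv α y x := by rw [hq2]
  have hne : ∀ (α : A) (x : V), x ≠ 0 → qinv α x ≠ 0 := by
    intro α x hx h0
    exact hx (by rw [← hq2 α x, h0, map_zero])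
  have hpos' : ∀ (α : A) (x : V), x ≠ 0 → 0 < qinv α₀ x (q α (qinv α₀ x)) := by
    intro α x hx
    exact hqpos α (qinv α₀ x) (hne α₀ x hx)
  -- the inner product coming from `qinv α₀`
  let core : InnerProductSpace.Core ℝ V :=
    { inner := fun x y => qinv α₀ x y
      conj_inner_symm := fun x y => by simpa using hs α₀ y x
      re_inner_nonneg := fun x => by
        rcases eq_or_ne x 0 with h | h
        · simp [h]
        · have := hpos' α₀ x h
          rw [hq2 α₀] at this
          simpa using this.le
      add_left := fun x y z => by simp
      smul_left := fun x y r => by simp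
      definite := fun x hx => by
        by_contra h
        have := hpos' α₀ x h
        rw [hq2 α₀] at this
        exact absurd hx (ne_of_gt this) }
  letI : NormedAddCommGroup V := core.toNormedAddCommGroup
  letI : InnerProductSpace ℝ V := InnerProductSpace.ofCore core.toCore
  have hinner : ∀ x y : V, ⟪x, y⟫ = qinv α₀ x y := fun _ _ => rfl
  -- the commuting family of positive symmetric operators
  set T : A → (V →ₗ[ℝ] V) := fun α => q α ∘ₗ qinv α₀ with hT
  have hTapp : ∀ (α : A) (x : V), T α x = q α (qinv α₀ x) := fun _ _ => rfl
  have hTsymm : ∀ α, (T α).IsSymmetric := by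
    intro α x y
    rw [hinner, hinner, hTapp, hTapp, hs α₀ (q α (qinv α₀ x)) y]
    exact hqsymm α _ _
  have hTpos : ∀ (α : A) (x : V), x ≠ 0 → 0 < ⟪T α x, x⟫ := by
    intro α x hx
    rw [hinner, hTapp, hs α₀ _ x]
    exact hpos' α x hx
  have key1 : ∀ (α : A) (ω : W) (x : V),
      q α (qinv α₀ (q α₀ (b ω x))) = q α₀ (b ω (q α (qinv α₀ x))) := by
    intro α ω x
    rw [hq1 α₀, hcomm' α₀ α ω, hq2 α₀]
  have hsurj2 : ∀ x : V, ∃ g : Module.Dual ℝ V, q α₀ (b ω₀ (q α₀ g)) = x := by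
    intro x
    obtain ⟨z, hz⟩ := hω₀.surjective (qinv α₀ x)
    exact ⟨qinv α₀ z, by rw [hq2 α₀, hz, hq2 α₀]⟩
  have hTcomm : ∀ α β, T α ∘ₗ T β = T β ∘ₗ T α := by
    intro α β
    ext x
    obtain ⟨g, rfl⟩ := hsurj2 x
    simp only [LinearMap.comp_apply, hTapp]
    rw [hq1 α₀, hcomm' β α₀ ω₀ g, hcomm' α α₀ ω₀ g, hq1 α₀, hq1 α₀]
    exact hcomm' α β ω₀ g
  obtain ⟨N, P, χ, hP0, hPidem, hPsum, hPorth, hPsym, hPcomm, hPeig, hχpos⟩ :=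
    stmt4_aux T hTsymm hTpos hTcomm
  have hPidem' : ∀ (γ : Fin N) (x : V), P γ (P γ x) = P γ x := by
    intro γ x
    simpa using LinearMap.ext_iff.mp (hPidem γ) x
  refine ⟨N, P, hP0, hPidem, hPsum, hPorth, ?_, ?_, ?_⟩
  · -- b-self-adjointness
    intro γ ω x y
    set S : V →ₗ[ℝ] V := q α₀ ∘ₗ b ω with hS
    have hSapp : ∀ x : V, S x = q α₀ (b ω x) := fun _ => rfl
    have hScomm : ∀ α, S ∘ₗ T α = T α ∘ₗ S := by
      intro α
      ext z
      simp only [LinearMap.comp_apply, hSapp, hTapp]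
      exact (key1 α ω z).symm
    have hS'comm : ∀ α, (-S) ∘ₗ T α = T α ∘ₗ (-S) := by
      intro α
      rw [LinearMap.neg_comp, LinearMap.comp_neg, hScomm α]
    have hadj : ∀ u v : V, ⟪u, S v⟫ = ⟪(-S) u, v⟫ := by
      intro u v
      rw [hinner, hinner]
      simp only [LinearMap.neg_apply, map_neg, hSapp, hq1 α₀]
      rw [hs α₀ u, hq1 α₀]
      exact hbskew ω v u
    have hPS := hPcomm γ S (-S) hScomm hS'comm hadj
    have hPS' : ∀ z : V, S (P γ z) = P γ (S z) := by
      intro z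
      simpa using (LinearMap.ext_iff.mp hPS z).symm
    have e1 : ∀ u v : V, b ω u v = ⟪S u, v⟫ := by
      intro u v
      rw [hinner, hSapp, hq1 α₀]
    calc b ω (P γ x) y = ⟪S (P γ x), y⟫ := e1 _ _
      _ = ⟪P γ (S x), y⟫ := by rw [hPS']
      _ = ⟪S x, P γ y⟫ := hPsym γ _ _
      _ = b ω x (P γ y) := (e1 _ _).symm
  · -- qinv-self-adjointness
    intro γ α x y
    set C : V →ₗ[ℝ] V := q α₀ ∘ₗ qinv α with hC
    have hCapp : ∀ x : V, C x = q α₀ (qinv α x) := fun _ => rfl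
    have hCA : ∀ z : V, C (T α z) = z := by
      intro z
      rw [hCapp, hTapp, hq1 α, hq2 α₀]
    have hAC : ∀ z : V, T α (C z) = z := by
      intro z
      rw [hCapp, hTapp, hq1 α₀, hq2 α]
    have hTT : ∀ (β : A) (z : V), T β (T α z) = T α (T β z) := by
      intro β z
      simpa using LinearMap.ext_iff.mp (hTcomm β α) z
    have hCcomm : ∀ β, C ∘ₗ T β = T β ∘ₗ C := by
      intro β
      ext z
      simp only [LinearMap.comp_apply]
      calc C (T β z) = C (T β (T α (C z))) := by rw [hAC]
        _ = C (T α (T β (C z))) := by rw [hTT]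
        _ = T β (C z) := by rw [hCA]
    have hCadj : ∀ u v : V, ⟪u, C v⟫ = ⟪C u, v⟫ := by
      intro u v
      rw [hinner, hinner, hCapp, hCapp, hs α₀ u, hq1 α₀, hq1 α₀]
      exact hs α v u
    have hPC := hPcomm γ C C hCcomm hCcomm hCadj
    have hPC' : ∀ z : V, C (P γ z) = P γ (C z) := by
      intro z
      simpa using (LinearMap.ext_iff.mp hPC z).symm
    have e2 : ∀ u v : V, qinv α u v = ⟪C u, v⟫ := by
      intro u v
      rw [hinner, hCapp, hq1 α₀]
    calc qinv α (P γ x) y = ⟪C (P γ x), y⟫ := e2 _ _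
      _ = ⟪P γ (C x), y⟫ := by rw [hPC']
      _ = ⟪C x, P γ y⟫ := hPsym γ _ _
      _ = qinv α x (P γ y) := (e2 _ _).symm
  · -- proportionality
    intro γ α β
    refine ⟨χ γ α / χ γ β, ?_⟩
    have hqinv₀inj : Function.Injective (qinv α₀) :=
      Function.LeftInverse.injective (hq2 α₀)
    have hdual : ∀ f : Module.Dual ℝ V,
        q α₀ ((P γ).dualMap f) = P γ (q α₀ f) := by
      intro f
      apply hqinv₀inj
      rw [hq1 α₀]
      ext z
      have : qinv α₀ (P γ (q α₀ f)) z = qinv α₀ (q α₀ f) (P γ z) := by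
        rw [← hinner, ← hinner]
        exact hPsym γ _ _
      rw [this, hq1 α₀]
      rfl
    have key3 : ∀ (δ : A) (f : Module.Dual ℝ V),
        q δ ((P γ).dualMap f) = T δ (P γ (q α₀ f)) := by
      intro δ f
      rw [hTapp, ← hdual f, hq1 α₀]
    have heig : ∀ (δ : A) (z : V), T δ (P γ z) = χ γ δ • P γ z := by
      intro δ z
      simpa using LinearMap.ext_iff.mp (hPeig γ δ) z
    ext f
    simp only [LinearMap.comp_apply, LinearMap.smul_apply]
    rw [key3 α f, key3 β f, heig α, heig β, map_smul, map_smul,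
      hPidem' γ, smul_smul, div_mul_cancel₀]
    exact ne_of_gt (hχpos γ β)
end

section
/- Let E₁ and E₂ be finite-dimensional real vector spaces, C a convex subset of E₁ with nonempty interior, and L : E₁ → E₂ a linear map which is proper on the boundary ∂C of C (the intersection with ∂C of the preimage of every compact set is compact). Assume that for every x ∈ ∂C, either L⁻¹(L(x)) ∩ ∂C = {x}, or there exist an open neighbourhood U of x in E₁ and a real-analytic function φ : U → ℝ whose derivative is nonvanishing on U such that ∂C ∩ U = φ⁻¹(0). Then the map ∂C → L(∂C) induced by L is an open map (both sets carrying the subspace topology). -/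
open Set Filter Topology Metric

set_option maxHeartbeats 1000000

lemma stmt8_core {E₁ E₂ : Type*}
    [NormedAddCommGroup E₁] [NormedSpace ℝ E₁] [FiniteDimensional ℝ E₁]
    [NormedAddCommGroup E₂] [NormedSpace ℝ E₂] [FiniteDimensional ℝ E₂]
    (C : Set E₁) (L : E₁ →ₗ[ℝ] E₂)
    (hproper : ∀ K : Set E₂, IsCompact K → IsCompact (L ⁻¹' K ∩ frontier C))
    (x₀ : E₁) (hx₀ : x₀ ∈ frontier C)
    (hfib : L ⁻¹' {L x₀} ∩ frontier C = {x₀}) {ε : ℝ} (hε : 0 < ε) :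
    ∃ δ > 0, ∀ z ∈ frontier C, dist (L z) (L x₀) < δ →
      ∃ w ∈ frontier C, dist w x₀ < ε ∧ L w = L z := by
  have hLcont : Continuous L := L.continuous_of_finiteDimensional
  by_contra hcon
  push_neg at hcon
  choose z hz hdist hsep using fun n : ℕ => hcon (1 / (n + 1)) (by positivity)
  have hεz : ∀ n, ε ≤ dist (z n) x₀ := by
    intro n
    by_contra h
    push_neg at h
    exact hsep n (z n) (hz n) h rfl
  have hmem : ∀ n, z n ∈ L ⁻¹' (Metric.closedBall (L x₀) 1) ∩ frontier C := by
    intro n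
    refine ⟨?_, hz n⟩
    have h1 : (1 : ℝ) / (n + 1) ≤ 1 := by
      rw [div_le_one (by positivity)]
      simp
    exact Metric.mem_closedBall.mpr (le_trans (hdist n).le h1)
  obtain ⟨w, hw, σ, hσmono, hσtend⟩ :=
    (hproper _ (isCompact_closedBall _ _)).tendsto_subseq hmem
  have hLw : L w = L x₀ := by
    have h1 : Tendsto (fun n => L (z (σ n))) atTop (𝓝 (L w)) :=
      (hLcont.tendsto w).comp hσtend
    have h2 : Tendsto (fun n => L (z (σ n))) atTop (𝓝 (L x₀)) := by
      rw [tendsto_iff_dist_tendsto_zero]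
      apply squeeze_zero (fun n => dist_nonneg) (fun n => ?_)
        tendsto_one_div_add_atTop_nhds_zero_nat
      calc dist (L (z (σ n))) (L x₀) ≤ 1 / (σ n + 1) := (hdist (σ n)).le
        _ ≤ 1 / (n + 1) := by
            apply one_div_le_one_div_of_le (by positivity)
            have h := hσmono.le_apply (x := n)
            have h2 : (n : ℝ) ≤ (σ n : ℝ) := by exact_mod_cast h
            linarith
    exact tendsto_nhds_unique h1 h2
  have hwfib : w ∈ L ⁻¹' {L x₀} ∩ frontier C := ⟨by simp [hLw], hw.2⟩
  rw [hfib] at hwfib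
  have hdw : Tendsto (fun n => dist (z (σ n)) x₀) atTop (𝓝 (dist w x₀)) :=
    ((continuous_id.dist continuous_const).tendsto w).comp hσtend
  have : ε ≤ dist w x₀ := ge_of_tendsto hdw (Eventually.of_forall fun n => hεz (σ n))
  rw [hwfib] at this
  simp at this
  linarith

lemma stmt8_fiber {E₁ E₂ : Type*}
    [NormedAddCommGroup E₁] [NormedSpace ℝ E₁] [FiniteDimensional ℝ E₁]
    [NormedAddCommGroup E₂] [NormedSpace ℝ E₂] [FiniteDimensional ℝ E₂]
    (C : Set E₁) (hC : Convex ℝ C) (hCint : (interior C).Nonempty)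
    (L : E₁ →ₗ[ℝ] E₂)
    (hproper : ∀ K : Set E₂, IsCompact K → IsCompact (L ⁻¹' K ∩ frontier C))
    (hreg : ∀ x ∈ frontier C, (L ⁻¹' {L x} ∩ frontier C = {x}) ∨
      ∃ U : Set E₁, IsOpen U ∧ x ∈ U ∧ ∃ φ : E₁ → ℝ, AnalyticOnNhd ℝ φ U ∧
        (∀ y ∈ U, fderiv ℝ φ y ≠ 0) ∧ frontier C ∩ U = {y ∈ U | φ y = 0})
    (x₀ : E₁) (hx₀ : x₀ ∈ frontier C)
    (U : Set E₁) (hU : IsOpen U) (hx₀U : x₀ ∈ U)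
    (φ : E₁ → ℝ) (hφan : AnalyticOnNhd ℝ φ U)
    (hφ' : ∀ y ∈ U, fderiv ℝ φ y ≠ 0)
    (heq : frontier C ∩ U = {y ∈ U | φ y = 0})
    (htan : ∀ v : E₁, L v = 0 → fderiv ℝ φ x₀ v = 0) :
    L ⁻¹' {L x₀} ∩ frontier C = {x₀} := by
  set ℓ := fderiv ℝ φ x₀ with hℓdef
  have hℓ0 : ℓ ≠ 0 := hφ' x₀ hx₀U
  obtain ⟨y₀, hy₀⟩ := hCint
  obtain ⟨r, hr, hrU⟩ := Metric.isOpen_iff.mp hU x₀ hx₀U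
  have hx₀cl : x₀ ∈ closure C := frontier_subset_closure hx₀
  have hφx₀ : φ x₀ = 0 := by
    have h : x₀ ∈ frontier C ∩ U := ⟨hx₀, hx₀U⟩
    rw [heq] at h
    exact h.2
  have hfrnotint : ∀ z : E₁, z ∈ frontier C → z ∉ interior C := by
    intro z hzf hzi
    have h := (closure_diff_interior C).symm ▸ hzf
    exact h.2 hzi
  set S := interior C ∩ Metric.ball x₀ r with hSdef
  have hSU : S ⊆ U := fun z hz => hrU hz.2
  have hSconv : Convex ℝ S := (hC.interior).inter (convex_ball x₀ r)
  have hSno : ∀ z ∈ S, φ z ≠ 0 := by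
    intro z hz h0
    have h : z ∈ frontier C ∩ U := by
      rw [heq]
      exact ⟨hSU hz, h0⟩
    exact hfrnotint z h.1 hz.1
  -- sign dichotomy
  have hsign : (∀ z ∈ S, φ z < 0) ∨ (∀ z ∈ S, 0 < φ z) := by
    by_contra hcontra
    push_neg at hcontra
    obtain ⟨⟨a, ha, ha'⟩, ⟨b, hb, hb'⟩⟩ := hcontra
    have hf : ContinuousOn (fun t : ℝ => φ (b + t • (a - b))) (Icc 0 1) := by
      apply (hφan.continuousOn).comp
      · exact (Continuous.continuousOn (by continuity))
      · intro t ht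
        exact hSU (hSconv.add_smul_sub_mem hb ha ht)
    obtain ⟨t, htIcc, hft⟩ := intermediate_value_Icc zero_le_one hf
      (by
        constructor
        · simpa using hb'
        · simpa using ha')
    exact hSno _ (hSconv.add_smul_sub_mem hb ha htIcc) hft
  obtain ⟨s, hs1, hsneg⟩ : ∃ s : ℝ, (s = 1 ∨ s = -1) ∧ ∀ z ∈ S, s * φ z < 0 := by
    rcases hsign with h | h
    · exact ⟨1, Or.inl rfl, fun z hz => by simpa using h z hz⟩
    · exact ⟨-1, Or.inr rfl, fun z hz => by have := h z hz; nlinarith⟩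
  have hs0 : s ≠ 0 := by rcases hs1 with rfl | rfl <;> norm_num
  -- supporting inequality on the interior
  have hsup : ∀ z ∈ interior C, s * ℓ (z - x₀) ≤ 0 := by
    intro z hz
    by_contra hpos
    push_neg at hpos
    have hpos' : 0 < s * ℓ (z - x₀) := hpos
    set g := fun t : ℝ => s * φ (x₀ + t • (z - x₀)) with hgdef
    have hc : HasDerivAt (fun t : ℝ => x₀ + t • (z - x₀)) (z - x₀) 0 := by
      simpa using ((hasDerivAt_id (0:ℝ)).smul_const (z - x₀)).const_add x₀
    have hφd : HasFDerivAt φ ℓ x₀ := (hφan x₀ hx₀U).hasStrictFDerivAt.hasFDerivAt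
    have hφd' : HasFDerivAt φ ℓ (x₀ + (0:ℝ) • (z - x₀)) := by simpa using hφd
    have hg : HasDerivAt g (s * ℓ (z - x₀)) 0 :=
      (hφd'.comp_hasDerivAt 0 hc).const_mul s
    rw [hasDerivAt_iff_tendsto_slope] at hg
    have hev : ∀ᶠ t in 𝓝[≠] (0:ℝ), 0 < slope g 0 t :=
      hg.eventually (eventually_gt_nhds hpos')
    have hev' : ∀ᶠ t in 𝓝[>] (0:ℝ), 0 < slope g 0 t :=
      hev.filter_mono (nhdsWithin_mono 0 (fun t ht => ne_of_gt ht))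
    have hballev : ∀ᶠ t in 𝓝[>] (0:ℝ), x₀ + t • (z - x₀) ∈ Metric.ball x₀ r := by
      have hco : Continuous fun t : ℝ => x₀ + t • (z - x₀) :=
        continuous_const.add (continuous_id.smul continuous_const)
      have htd : Tendsto (fun t : ℝ => x₀ + t • (z - x₀)) (𝓝 0) (𝓝 x₀) := by
        have := hco.tendsto 0
        simpa using this
      exact (htd.eventually_mem (Metric.ball_mem_nhds x₀ hr)).filter_mono nhdsWithin_le_nhds
    have hIocev : ∀ᶠ t in 𝓝[>] (0:ℝ), t ∈ Set.Ioc (0:ℝ) 1 :=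
      Ioc_mem_nhdsGT zero_lt_one
    obtain ⟨t, hslope, hballt, hIoct⟩ := (hev'.and (hballev.and hIocev)).exists
    have hmemS : x₀ + t • (z - x₀) ∈ S :=
      ⟨hC.add_smul_sub_mem_interior' hx₀cl hz hIoct, hballt⟩
    have hneg := hsneg _ hmemS
    have hg0 : g 0 = 0 := by simp [hgdef, hφx₀]
    have ht0 : 0 < t := hIoct.1
    have h2 : 0 < g t / t := by
      have := hslope
      rw [slope_def_field] at this
      simpa [hg0] using this
    have hgt : 0 < g t := by
      have := mul_pos h2 ht0
      rwa [div_mul_cancel₀ _ ht0.ne'] at this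
    have : g t < 0 := hneg
    linarith
  -- extend to the closure
  have hsupc : ∀ z ∈ closure C, s * ℓ (z - x₀) ≤ 0 := by
    intro z hz
    have hlim : Tendsto (fun t : ℝ => s * ℓ (z + t • (y₀ - z) - x₀)) (𝓝[>] 0)
        (𝓝 (s * ℓ (z - x₀))) := by
      have hco : Continuous fun t : ℝ => s * ℓ (z + t • (y₀ - z) - x₀) :=
        continuous_const.mul (ℓ.continuous.comp
          ((continuous_const.add (continuous_id.smul continuous_const)).sub continuous_const))
      have := hco.tendsto 0
      simp only [zero_smul, add_zero] at this
      exact this.mono_left nhdsWithin_le_nhds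
    refine le_of_tendsto hlim ?_
    filter_upwards [Ioc_mem_nhdsGT (zero_lt_one (α := ℝ))] with t ht
    exact hsup _ (hC.add_smul_sub_mem_interior' hz hy₀ ht)
  -- strict inequality on the interior
  have hstrict : ∀ z ∈ interior C, s * ℓ (z - x₀) < 0 := by
    intro z hz
    rcases lt_or_eq_of_le (hsup z hz) with h | h
    · exact h
    exfalso
    obtain ⟨δ, hδ, hball⟩ := Metric.isOpen_iff.mp isOpen_interior z hz
    have hker : ∀ w : E₁, ℓ w = 0 := by
      intro w
      by_cases hw : w = 0
      · simp [hw]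
      have hwn : 0 < ‖w‖ := norm_pos_iff.mpr hw
      set c := δ / (2 * ‖w‖) with hcdef
      have hc : 0 < c := by positivity
      have hcw : ‖c • w‖ < δ := by
        rw [norm_smul, Real.norm_eq_abs, abs_of_pos hc, hcdef]
        rw [div_mul_eq_mul_div, mul_comm]
        rw [div_lt_iff₀ (by positivity)]
        nlinarith
      have h1 : z + c • w ∈ interior C := by
        apply hball
        rw [Metric.mem_ball, dist_eq_norm]
        simpa using hcw
      have h2 : z - c • w ∈ interior C := by
        apply hball
        rw [Metric.mem_ball, dist_eq_norm]
        simpa [norm_neg] using hcw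
      have e1 := hsupc _ (subset_closure (interior_subset h1))
      have e2 := hsupc _ (subset_closure (interior_subset h2))
      have eq1 : z + c • w - x₀ = (z - x₀) + c • w := by abel
      have eq2 : z - c • w - x₀ = (z - x₀) - c • w := by abel
      rw [eq1, map_add, map_smul] at e1
      rw [eq2, map_sub, map_smul] at e2
      simp only [smul_eq_mul] at e1 e2
      have he1 : s * (ℓ (z - x₀) + c * ℓ w) = s * ℓ (z - x₀) + s * (c * ℓ w) := by ring
      have he2 : s * (ℓ (z - x₀) - c * ℓ w) = s * ℓ (z - x₀) - s * (c * ℓ w) := by ring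
      rw [he1, h, zero_add] at e1
      rw [he2, h, zero_sub] at e2
      have h3 : s * (c * ℓ w) = 0 := le_antisymm e1 (by linarith)
      rcases mul_eq_zero.mp h3 with h4 | h4
      · exact absurd h4 hs0
      rcases mul_eq_zero.mp h4 with h5 | h5
      · exact absurd h5 (ne_of_gt hc)
      · exact h5 ▸ rfl
    exact hℓ0 (ContinuousLinearMap.ext fun w => by simp [hker w])
  -- the fibre equals the intersection with the closure
  have hFC : L ⁻¹' {L x₀} ∩ frontier C = L ⁻¹' {L x₀} ∩ closure C := by
    ext z
    constructor
    · rintro ⟨h1, h2⟩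
      exact ⟨h1, frontier_subset_closure h2⟩
    · rintro ⟨h1, h2⟩
      refine ⟨h1, ?_⟩
      rw [← closure_diff_interior]
      refine ⟨h2, fun hint => ?_⟩
      have hst := hstrict z hint
      have hLz : L z = L x₀ := h1
      have hz0 : ℓ (z - x₀) = 0 := htan _ (by rw [map_sub, hLz, sub_self])
      rw [hz0] at hst
      simp at hst
  -- now the main argument
  apply Set.eq_singleton_iff_unique_mem.mpr
  refine ⟨⟨by simp, hx₀⟩, ?_⟩
  intro z hzF
  by_contra hne
  set v := z - x₀ with hvdef
  have hv0 : v ≠ 0 := sub_ne_zero.mpr hne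
  have hLz : L z = L x₀ := hzF.1
  have hLv : L v = 0 := by rw [hvdef, map_sub, hLz, sub_self]
  have hFcpt : IsCompact (L ⁻¹' {L x₀} ∩ frontier C) := hproper _ isCompact_singleton
  have hFconv : Convex ℝ (L ⁻¹' {L x₀} ∩ frontier C) := by
    rw [hFC]
    exact ((convex_singleton _).linear_preimage L).inter hC.closure
  set T := {t : ℝ | x₀ + t • v ∈ L ⁻¹' {L x₀} ∩ frontier C} with hTdef
  have h0T : (0:ℝ) ∈ T := by
    simp only [hTdef, Set.mem_setOf_eq, zero_smul, add_zero]
    exact ⟨by simp, hx₀⟩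
  have h1T : (1:ℝ) ∈ T := by
    simp only [hTdef, Set.mem_setOf_eq, one_smul]
    have hxz : x₀ + v = z := by rw [hvdef]; abel
    rw [hxz]
    exact hzF
  have hTconv : Convex ℝ T := by
    intro t₁ h₁ t₂ h₂ a b ha hb hab
    simp only [hTdef, Set.mem_setOf_eq, smul_eq_mul] at h₁ h₂ ⊢
    have hcomb := hFconv h₁ h₂ ha hb hab
    have heql : a • (x₀ + t₁ • v) + b • (x₀ + t₂ • v)
        = (a + b) • x₀ + (a * t₁ + b * t₂) • v := by
      rw [smul_add, smul_add, smul_smul, smul_smul, add_smul, add_smul]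
      abel
    rw [hab, one_smul] at heql
    rwa [heql] at hcomb
  have hTclosed : IsClosed T := by
    exact hFcpt.isClosed.preimage (continuous_const.add (continuous_id.smul continuous_const))
  obtain ⟨M, hM⟩ := hFcpt.isBounded.exists_norm_le
  have hTsub : T ⊆ Set.Icc (-(M + ‖x₀‖) / ‖v‖) ((M + ‖x₀‖) / ‖v‖) := by
    intro t ht
    have ht' : x₀ + t • v ∈ L ⁻¹' {L x₀} ∩ frontier C := ht
    have h1 : ‖x₀ + t • v‖ ≤ M := hM _ ht'
    have h2 : ‖t • v‖ ≤ M + ‖x₀‖ := by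
      calc ‖t • v‖ = ‖(x₀ + t • v) - x₀‖ := by congr 1; abel
        _ ≤ ‖x₀ + t • v‖ + ‖x₀‖ := norm_sub_le _ _
        _ ≤ M + ‖x₀‖ := by linarith
    rw [norm_smul, Real.norm_eq_abs] at h2
    have hvn : 0 < ‖v‖ := norm_pos_iff.mpr hv0
    have h3 : |t| ≤ (M + ‖x₀‖) / ‖v‖ := by
      rw [le_div_iff₀ hvn]
      linarith
    rw [abs_le] at h3
    constructor
    · rw [neg_div]
      exact h3.1
    · exact h3.2
  have hTcpt : IsCompact T := (isCompact_Icc).of_isClosed_subset hTclosed hTsub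
  set b := sSup T with hbdef
  have hbT : b ∈ T := hTcpt.sSup_mem ⟨0, h0T⟩
  have hb1 : (1:ℝ) ≤ b := le_csSup hTcpt.bddAbove h1T
  set x₁ := x₀ + b • v with hx₁def
  have hx₁F : x₁ ∈ L ⁻¹' {L x₀} ∩ frontier C := hbT
  have hLx₁ : L x₁ = L x₀ := hx₁F.1
  rcases hreg x₁ hx₁F.2 with hsing | ⟨U₁, hU₁, hx₁U₁, φ₁, han₁, hd₁, heq₁⟩
  · -- the fibre through x₁ is a singleton
    have hx₀mem : x₀ ∈ L ⁻¹' {L x₁} ∩ frontier C := ⟨by simp [hLx₁], hx₀⟩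
    rw [hsing] at hx₀mem
    have : x₀ = x₁ := hx₀mem
    have hbv : b • v = 0 := by
      have := this
      rw [hx₁def] at this
      have := congrArg (fun w => w - x₀) this
      simpa using this.symm
    exact smul_ne_zero (by linarith : b ≠ 0) hv0 hbv
  · -- analytic chart at x₁
    set g := fun t : ℝ => φ₁ (x₀ + t • v) with hgdef
    have hco : Continuous fun t : ℝ => x₀ + t • v :=
      continuous_const.add (continuous_id.smul continuous_const)
    have hgan : AnalyticAt ℝ g b := by
      have h1 : AnalyticAt ℝ (fun t : ℝ => x₀ + t • v) b :=
        analyticAt_const.add ((analyticAt_id.smul analyticAt_const))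
      have h2 : AnalyticAt ℝ φ₁ ((fun t : ℝ => x₀ + t • v) b) := han₁ x₁ hx₁U₁
      exact AnalyticAt.comp (g := φ₁) (f := fun t : ℝ => x₀ + t • v) (x := b) h2 h1
    have hU₁nhds : ∀ᶠ t in 𝓝 b, x₀ + t • v ∈ U₁ := by
      have : Tendsto (fun t : ℝ => x₀ + t • v) (𝓝 b) (𝓝 x₁) := hco.tendsto b
      exact this.eventually_mem (hU₁.mem_nhds hx₁U₁)
    have hIcc : Set.Icc (0:ℝ) b ⊆ T := by
      have hseg := hTconv.segment_subset h0T hbT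
      rwa [segment_eq_Icc (by linarith : (0:ℝ) ≤ b)] at hseg
    have hzero : ∀ t ∈ T, x₀ + t • v ∈ U₁ → g t = 0 := by
      intro t ht htU
      have hmem : x₀ + t • v ∈ frontier C ∩ U₁ := ⟨ht.2, htU⟩
      rw [heq₁] at hmem
      exact hmem.2
    rcases hgan.eventually_eq_zero_or_eventually_ne_zero with hcase | hcase
    · -- eventually zero near b: contradicts maximality
      have hcomb := hcase.and hU₁nhds
      obtain ⟨η, hη, hsub⟩ := Metric.eventually_nhds_iff.mp hcomb
      set t' := b + η / 2 with ht'def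
      have hdist' : dist t' b < η := by
        rw [Real.dist_eq, ht'def]
        rw [add_sub_cancel_left]
        rw [abs_of_pos (by linarith)]
        linarith
      obtain ⟨hgt', ht'U⟩ := hsub hdist'
      have ht'T : t' ∈ T := by
        refine ⟨?_, ?_⟩
        · show x₀ + t' • v ∈ L ⁻¹' {L x₀}
          have : L (x₀ + t' • v) = L x₀ := by
            rw [map_add, map_smul, hLv, smul_zero, add_zero]
          exact Set.mem_preimage.mpr (Set.mem_singleton_iff.mpr this)
        · have : x₀ + t' • v ∈ frontier C ∩ U₁ := by
            rw [heq₁]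
            exact ⟨ht'U, hgt'⟩
          exact this.1
      have : t' ≤ b := le_csSup hTcpt.bddAbove ht'T
      rw [ht'def] at this
      linarith
    · -- eventually nonzero on punctured nbhd: contradicts zeros on the left
      have hlt : ∀ᶠ t in 𝓝[<] b, g t ≠ 0 :=
        hcase.filter_mono (nhdsWithin_mono b fun t ht => ne_of_lt ht)
      have hU₁lt : ∀ᶠ t in 𝓝[<] b, x₀ + t • v ∈ U₁ :=
        hU₁nhds.filter_mono nhdsWithin_le_nhds
      have hTlt : ∀ᶠ t in 𝓝[<] b, t ∈ T := by
        filter_upwards [Ioo_mem_nhdsLT (show b - 1 < b by linarith)] with t ht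
        exact hIcc ⟨by linarith [ht.1], le_of_lt ht.2⟩
      obtain ⟨t, h1, h2, h3⟩ := (hlt.and (hU₁lt.and hTlt)).exists
      exact h1 (hzero t h3 h2)

/-- Let `C` be a convex subset with nonempty interior of a
finite-dimensional real vector space `E₁`, and `L : E₁ → E₂` a linear map which is proper
on the frontier of `C`. If for every `x ∈ ∂C` either the fibre of `L` through `x` meets
`∂C` only at `x`, or `∂C` is near `x` the zero set of a real-analytic function with
nonvanishing derivative, then the map `∂C → L(∂C)` induced by `L` is open. -/
theorem stmt8 {E₁ E₂ : Type*}
    [NormedAddCommGroup E₁] [NormedSpace ℝ E₁] [FiniteDimensional ℝ E₁]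
    [NormedAddCommGroup E₂] [NormedSpace ℝ E₂] [FiniteDimensional ℝ E₂]
    (C : Set E₁) (hC : Convex ℝ C) (hCint : (interior C).Nonempty)
    (L : E₁ →ₗ[ℝ] E₂)
    (hproper : ∀ K : Set E₂, IsCompact K → IsCompact (L ⁻¹' K ∩ frontier C))
    (hreg : ∀ x ∈ frontier C, (L ⁻¹' {L x} ∩ frontier C = {x}) ∨
      ∃ U : Set E₁, IsOpen U ∧ x ∈ U ∧ ∃ φ : E₁ → ℝ, AnalyticOnNhd ℝ φ U ∧
        (∀ y ∈ U, fderiv ℝ φ y ≠ 0) ∧ frontier C ∩ U = {y ∈ U | φ y = 0}) :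
    IsOpenMap (fun x : frontier C =>
      (⟨L x, Set.mem_image_of_mem L x.2⟩ : L '' frontier C)) := by
  classical
  -- the key pointwise openness property
  have key : ∀ x₀ ∈ frontier C, ∀ ε > 0, ∃ δ > 0, ∀ z ∈ frontier C,
      dist (L z) (L x₀) < δ → ∃ w ∈ frontier C, dist w x₀ < ε ∧ L w = L z := by
    intro x₀ hx₀ ε hε
    rcases hreg x₀ hx₀ with hsing | ⟨U, hU, hx₀U, φ, hφan, hφ', heq⟩
    · exact stmt8_core C L hproper x₀ hx₀ hsing hε
    by_cases htan : ∀ v : E₁, L v = 0 → fderiv ℝ φ x₀ v = 0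
    · exact stmt8_core C L hproper x₀ hx₀
        (stmt8_fiber C hC hCint L hproper hreg x₀ hx₀ U hU hx₀U φ hφan hφ' heq htan) hε
    -- transverse case
    push_neg at htan
    obtain ⟨v, hLv, hℓv⟩ := htan
    set ℓ := fderiv ℝ φ x₀ with hℓdef
    have hφx₀ : φ x₀ = 0 := by
      have h : x₀ ∈ frontier C ∩ U := ⟨hx₀, hx₀U⟩
      rw [heq] at h
      exact h.2
    set R := LinearMap.range L with hRdef
    let Lc : E₁ →L[ℝ] R := LinearMap.toContinuousLinearMap L.rangeRestrict
    have hLc : ∀ x : E₁, (Lc x : E₂) = L x := fun x => rfl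
    set ψ := fun x : E₁ => ((Lc x, φ x) : R × ℝ) with hψdef
    have hψd : HasStrictFDerivAt ψ (Lc.prod ℓ) x₀ :=
      Lc.hasStrictFDerivAt.prodMk (hφan x₀ hx₀U).hasStrictFDerivAt
    have hsurj : LinearMap.range (Lc.prod ℓ : E₁ →ₗ[ℝ] R × ℝ) = ⊤ := by
      rw [LinearMap.range_eq_top]
      rintro ⟨⟨y, hy⟩, t⟩
      obtain ⟨u, hu⟩ := hy
      refine ⟨u + ((t - ℓ u) / ℓ v) • v, ?_⟩
      have h1 : (Lc (u + ((t - ℓ u) / ℓ v) • v) : E₂) = y := by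
        rw [hLc, map_add, map_smul, hLv, smul_zero, add_zero, hu]
      have h2 : ℓ (u + ((t - ℓ u) / ℓ v) • v) = t := by
        rw [map_add, map_smul, smul_eq_mul]
        field_simp
        ring
      change (Lc.prod ℓ) (u + ((t - ℓ u) / ℓ v) • v) = _
      rw [ContinuousLinearMap.prod_apply]
      exact Prod.ext (Subtype.ext h1) h2
    have hmap := hψd.map_nhds_eq_of_surj hsurj
    have hball : ψ '' (Metric.ball x₀ ε ∩ U) ∈ 𝓝 (ψ x₀) := by
      rw [← hmap]
      exact image_mem_map (Filter.inter_mem (Metric.ball_mem_nhds _ hε) (hU.mem_nhds hx₀U))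
    obtain ⟨δ, hδpos, hδ⟩ := Metric.mem_nhds_iff.mp hball
    refine ⟨δ, hδpos, ?_⟩
    intro z hz hdz
    have hmem : ((Lc z, (0:ℝ)) : R × ℝ) ∈ Metric.ball (ψ x₀) δ := by
      rw [Metric.mem_ball]
      have hψx₀ : ψ x₀ = ((Lc x₀, (0:ℝ)) : R × ℝ) := by
        rw [hψdef]
        simp [hφx₀]
      rw [hψx₀, Prod.dist_eq]
      have hd1 : dist (Lc z) (Lc x₀) = dist (L z) (L x₀) := by
        rw [Subtype.dist_eq]
        rw [hLc, hLc]
      simp only [dist_self]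
      rw [max_eq_left dist_nonneg, hd1]
      exact hdz
    obtain ⟨w, ⟨hwball, hwU⟩, hψw⟩ := hδ hmem
    have hw1 : Lc w = Lc z := congrArg Prod.fst hψw
    have hw2 : φ w = 0 := congrArg Prod.snd hψw
    have hwfr : w ∈ frontier C := by
      have h : w ∈ frontier C ∩ U := by
        rw [heq]
        exact ⟨hwU, hw2⟩
      exact h.1
    refine ⟨w, hwfr, ?_, ?_⟩
    · exact Metric.mem_ball.mp hwball
    · have := congrArg (Subtype.val) hw1
      rw [hLc, hLc] at this
      exact this
  -- assemble: openness of the induced map between the subtypes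
  intro O hO
  rw [Metric.isOpen_iff]
  rintro ⟨q, hq⟩ hmem
  obtain ⟨x, hxO, hfx⟩ := hmem
  obtain ⟨ε, hε, hball⟩ := Metric.isOpen_iff.mp hO x hxO
  obtain ⟨δ, hδ, hkey⟩ := key x.1 x.2 ε hε
  refine ⟨δ, hδ, ?_⟩
  rintro ⟨p, hp⟩ hpball
  have hqLx : L x.1 = q := congrArg Subtype.val hfx
  obtain ⟨zz, hzzfr, hzzp⟩ := hp
  have hdist : dist (L zz) (L x.1) < δ := by
    have h1 : dist p q < δ := by
      rw [Metric.mem_ball] at hpball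
      rwa [Subtype.dist_eq] at hpball
    rwa [hzzp, hqLx]
  obtain ⟨w, hwfr, hwdist, hwL⟩ := hkey zz hzzfr hdist
  refine ⟨⟨w, hwfr⟩, hball ?_, ?_⟩
  · rw [Metric.mem_ball, Subtype.dist_eq]
    exact hwdist
  · apply Subtype.ext
    show L w = p
    rw [hwL, hzzp]
end

section
/- Let V be a real topological vector space, C a convex subset of V with nonempty interior, and W an affine subspace of V such that W meets the interior of C. Then W ∩ ∂C equals the frontier of W ∩ C in W (with the subspace topology on W), where ∂C is the frontier of C in V. In particular, W ∩ int(C) is the interior of W ∩ C in W and W ∩ closure(C) is the closure of W ∩ C in W. -/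
open Topology Filter Set


/-- If `C` is a convex subset with nonempty interior of a real topological
vector space `V` and `W` is an affine subspace meeting the interior of `C`, then
`W ∩ ∂C` is the frontier of `W ∩ C` in `W`; moreover `W ∩ int C` is the interior of
`W ∩ C` in `W` and `W ∩ closure C` is the closure of `W ∩ C` in `W`. -/
theorem stmt9 {V : Type*} [AddCommGroup V] [Module ℝ V] [TopologicalSpace V]
    [IsTopologicalAddGroup V] [ContinuousSMul ℝ V]
    (C : Set V) (hC : Convex ℝ C) (hCint : (interior C).Nonempty)
    (W : AffineSubspace ℝ V) (hW : ((W : Set V) ∩ interior C).Nonempty) :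
    (W : Set V) ∩ frontier C =
      Subtype.val '' frontier ((Subtype.val : W → V) ⁻¹' C) ∧
    (W : Set V) ∩ interior C =
      Subtype.val '' interior ((Subtype.val : W → V) ⁻¹' C) ∧
    (W : Set V) ∩ closure C =
      Subtype.val '' closure ((Subtype.val : W → V) ⁻¹' C) := by
  obtain ⟨x₀, hx₀W, hx₀⟩ := hW
  -- interior part
  have hint : (W : Set V) ∩ interior C =
      Subtype.val '' interior ((Subtype.val : W → V) ⁻¹' C) := by
    apply Set.Subset.antisymm
    · rintro x ⟨hxW, hx⟩
      refine ⟨⟨x, hxW⟩, ?_, rfl⟩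
      exact preimage_interior_subset_interior_preimage continuous_subtype_val hx
    · rintro _ ⟨⟨x, hxW⟩, hx, rfl⟩
      refine ⟨hxW, ?_⟩
      -- find t > 0 with x + t • (x - x₀) ∈ C
      have hnhds : ((Subtype.val : W → V) ⁻¹' C) ∈ 𝓝 (⟨x, hxW⟩ : W) :=
        mem_interior_iff_mem_nhds.1 hx
      rw [nhds_subtype_eq_comap, Filter.mem_comap] at hnhds
      obtain ⟨s, hs, hsC⟩ := hnhds
      have hg : Continuous fun t : ℝ => t • (x - x₀) + x := by continuity
      have h0 : (fun t : ℝ => t • (x - x₀) + x) 0 = x := by simp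
      have hev : ∀ᶠ t in 𝓝 (0 : ℝ), t • (x - x₀) + x ∈ s := by
        have h := hg.continuousAt (x := (0 : ℝ))
        rw [ContinuousAt] at h
        simp only [zero_smul, zero_add] at h
        exact h hs
      obtain ⟨t, ht, hts⟩ :=
        ((eventually_mem_nhdsWithin (a := (0:ℝ)) (s := Set.Ioi 0)).and
          (hev.filter_mono nhdsWithin_le_nhds)).exists
      have htW : t • (x - x₀) + x ∈ W := by
        have h := AffineSubspace.smul_vsub_vadd_mem W t hxW hx₀W hxW
        simpa [vsub_eq_sub, vadd_eq_add] using h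
      have hzC : t • (x - x₀) + x ∈ C := hsC (a := ⟨_, htW⟩) hts
      have ht0 : (0:ℝ) < t := ht
      have hab : t / (1 + t) + 1 / (1 + t) = 1 := by
        field_simp
        ring
      have h := hC.combo_interior_self_mem_interior hx₀ hzC
        (a := t / (1 + t)) (b := 1 / (1 + t))
        (by positivity) (by positivity) hab
      convert h using 1
      have h1t : (1 : ℝ) + t ≠ 0 := by positivity
      match_scalars <;> field_simp <;> ring
  -- closure part
  have hcl : (W : Set V) ∩ closure C =
      Subtype.val '' closure ((Subtype.val : W → V) ⁻¹' C) := by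
    apply Set.Subset.antisymm
    · rintro x ⟨hxW, hx⟩
      refine ⟨⟨x, hxW⟩, ?_, rfl⟩
      have memW : ∀ t : ℝ, t • (x₀ - x) + x ∈ W := fun t => by
        have h := AffineSubspace.smul_vsub_vadd_mem W t hx₀W hxW hxW
        simpa [vsub_eq_sub, vadd_eq_add] using h
      set f : ℝ → W := fun t => ⟨t • (x₀ - x) + x, memW t⟩ with hf
      have hfc : Continuous f := by
        apply Continuous.subtype_mk
        continuity
      have hf0 : f 0 = ⟨x, hxW⟩ := by simp [hf]
      have htend : Filter.Tendsto f (𝓝[>] (0:ℝ)) (𝓝 (⟨x, hxW⟩ : W)) := by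
        rw [← hf0]
        exact (hfc.tendsto 0).mono_left nhdsWithin_le_nhds
      refine mem_closure_of_tendsto htend ?_
      filter_upwards [Ioo_mem_nhdsGT (zero_lt_one)] with t ht
      have : t • x₀ + (1 - t) • x ∈ interior C :=
        hC.combo_interior_closure_mem_interior hx₀ hx ht.1 (by linarith [ht.2]) (by ring)
      have heq : t • x₀ + (1 - t) • x = t • (x₀ - x) + x := by module
      simp only [Set.mem_preimage, hf]
      exact interior_subset (heq ▸ this)
    · rintro _ ⟨⟨x, hxW⟩, hx, rfl⟩
      refine ⟨hxW, ?_⟩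
      have h := (continuous_subtype_val (p := fun y => y ∈ W)).closure_preimage_subset C
      exact h hx
  refine ⟨?_, hint, hcl⟩
  rw [frontier, frontier, Set.image_diff Subtype.val_injective, ← hint, ← hcl,
    Set.inter_diff_distrib_left]
end
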